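/- Let X = {0,1}³, f(x₁,x₂,x₃) = (−1)^{x₁+x₂+x₃}, and U = f^⊥ ⊆ ℝ^X. A subset p ⊆ X with |p| = 6 is a coatom of the lattice P(U) of ground sets of U (ordered by inclusion, with top element X) if and only if its complement p' = X \ p = {x, y} satisfies f(x) ≠ f(y). In particular, P(U) has exactly 16 coatoms. -/

import Mathlib

/-- The three-bit configuration space `X = {0,1}³`. -/
abbrev Bit3 : Type := Fin 2 × Fin 2 × Fin 2

/-- The parity function `f(x₁,x₂,x₃) = (−1)^{x₁+x₂+x₃}`. -/
def parity (x : Bit3) : ℝ := (-1 : ℝ) ^ ((x.1 : ℕ) + (x.2.1 : ℕ) + (x.2.2 : ℕ))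

/-- The ground set (argmin set) of `u : X → ℝ`. -/
def groundSet {X : Type*} (u : X → ℝ) : Set X := {x | ∀ y, u x ≤ u y}

/-- The lattice `P(U)` of ground sets of `U = parity^⊥`, together with `∅`. -/
def PU : Set (Set Bit3) :=
  {p | p = ∅ ∨ ∃ u : Bit3 → ℝ, (∑ x : Bit3, parity x * u x = 0) ∧ p = groundSet u}

/-- `p` is a coatom of `P(U)`: a maximal element of `P(U) \ {X}` under inclusion. -/
def IsCoat (p : Set Bit3) : Prop :=
  p ∈ PU ∧ p ≠ Set.univ ∧ ∀ q ∈ PU, q ≠ Set.univ → p ⊆ q → p = q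

/-- A subset `p ⊆ X` with `|p| = 6` is a coatom of the lattice `P(U)`
of ground sets of `U = parity^⊥` if and only if its complement `{x,y}` satisfies
`f(x) ≠ f(y)`.  Moreover, `P(U)` has exactly `16` coatoms. -/
lemma parity_eq_or (x : Bit3) : parity x = 1 ∨ parity x = -1 := by
  rcases Nat.even_or_odd ((x.1 : ℕ) + (x.2.1 : ℕ) + (x.2.2 : ℕ)) with h | h
  · exact Or.inl h.neg_one_pow
  · exact Or.inr h.neg_one_pow

lemma parity_ne_zero (x : Bit3) : parity x ≠ 0 := by
  rcases parity_eq_or x with h | h <;> rw [h] <;> norm_num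

lemma parity_add_eq_zero {x y : Bit3} (h : parity x ≠ parity y) :
    parity x + parity y = 0 := by
  rcases parity_eq_or x with hx | hx <;> rcases parity_eq_or y with hy | hy <;>
    rw [hx, hy] at h ⊢ <;> norm_num at *

lemma sum_parity : ∑ x : Bit3, parity x = 0 := by
  simp [Fintype.sum_prod_type, Fin.sum_univ_two, parity]
  norm_num

lemma exists_third : ∀ x y : Bit3, ∃ z : Bit3, z ≠ x ∧ z ≠ y := by decide

lemma pair_mem_PU {x y : Bit3} (h : parity x ≠ parity y) : ({x, y}ᶜ : Set Bit3) ∈ PU := by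
  have hxy : x ≠ y := fun e => h (by rw [e])
  refine Or.inr ⟨fun z => (if z = x then 1 else 0) + (if z = y then 1 else 0), ?_, ?_⟩
  · simp only [mul_add, Finset.sum_add_distrib, mul_ite, mul_one, mul_zero,
      Finset.sum_ite_eq' Finset.univ, Finset.mem_univ, if_true]
    exact parity_add_eq_zero h
  · ext z
    simp only [Set.mem_compl_iff, Set.mem_insert_iff, Set.mem_singleton_iff, groundSet,
      Set.mem_setOf_eq]
    constructor
    · intro hz w
      push_neg at hz
      rw [if_neg hz.1, if_neg hz.2]
      split_ifs <;> norm_num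
    · intro hz
      obtain ⟨w, hw1, hw2⟩ := exists_third x y
      have hw := hz w
      rw [if_neg hw1, if_neg hw2] at hw
      rintro (rfl | rfl)
      · simp [hxy] at hw; linarith
      · simp [Ne.symm hxy] at hw; linarith

lemma ground_mixed {u : Bit3 → ℝ} (hu : ∑ x : Bit3, parity x * u x = 0)
    {w : Bit3} (hw : w ∉ groundSet u) :
    ∃ a b : Bit3, a ∉ groundSet u ∧ b ∉ groundSet u ∧ parity a ≠ parity b := by
  classical
  by_contra hcon
  push_neg at hcon
  obtain ⟨z0, -, hz0⟩ := Finset.exists_min_image Finset.univ u ⟨w, Finset.mem_univ w⟩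
  set m := u z0 with hm
  have hmem : ∀ z, z ∈ groundSet u ↔ u z = m := by
    intro z
    constructor
    · intro hz; exact le_antisymm (hz z0) (hz0 z (Finset.mem_univ z))
    · intro hz v; rw [hz]; exact hz0 v (Finset.mem_univ v)
  have hlt : ∀ z, z ∉ groundSet u → m < u z := by
    intro z hz
    exact lt_of_le_of_ne (hz0 z (Finset.mem_univ z)) (fun e => hz ((hmem z).2 e.symm))
  have key : ∑ x : Bit3, parity x * (u x - m) = 0 := by
    have : ∑ x : Bit3, parity x * (u x - m)
        = ∑ x : Bit3, parity x * u x - (∑ x : Bit3, parity x) * m := by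
      rw [Finset.sum_mul, ← Finset.sum_sub_distrib]
      exact Finset.sum_congr rfl (fun z _ => by ring)
    rw [this, hu, sum_parity]; ring
  set s : Finset Bit3 := Finset.univ.filter (fun z => z ∉ groundSet u) with hs
  have h1 : ∑ x ∈ s, parity x * (u x - m) = 0 := by
    rw [← key]
    apply Finset.sum_subset (Finset.filter_subset _ _)
    intro z _ hz
    rw [Finset.mem_filter] at hz
    push_neg at hz
    have := (hmem z).1 (hz (Finset.mem_univ z))
    rw [this]; ring
  have h2 : ∑ x ∈ s, parity x * (u x - m) = parity w * ∑ x ∈ s, (u x - m) := by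
    rw [Finset.mul_sum]
    apply Finset.sum_congr rfl
    intro z hz
    rw [hs, Finset.mem_filter] at hz
    rw [hcon z w hz.2 hw]
  have h3 : 0 < ∑ x ∈ s, (u x - m) := by
    apply Finset.sum_pos
    · intro z hz
      rw [hs, Finset.mem_filter] at hz
      linarith [hlt z hz.2]
    · exact ⟨w, by rw [hs, Finset.mem_filter]; exact ⟨Finset.mem_univ w, hw⟩⟩
  rw [h2] at h1
  rcases mul_eq_zero.1 h1 with h | h
  · exact parity_ne_zero w h
  · linarith

lemma pair_ne_univ {x y : Bit3} : ({x, y}ᶜ : Set Bit3) ≠ Set.univ := by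
  intro h
  have : x ∈ ({x, y}ᶜ : Set Bit3) := h ▸ Set.mem_univ x
  exact this (Or.inl rfl)

lemma coat_iff (p : Set Bit3) :
    IsCoat p ↔ ∃ x y : Bit3, pᶜ = {x, y} ∧ parity x ≠ parity y := by
  constructor
  · rintro ⟨hPU, hne, hmax⟩
    rcases hPU with rfl | ⟨u, hu, rfl⟩
    · -- p = ∅ is not maximal
      exfalso
      have h01 : parity ((0,0,0) : Bit3) ≠ parity ((1,0,0) : Bit3) := by
        norm_num [parity]
      have := hmax _ (pair_mem_PU h01) pair_ne_univ (Set.empty_subset _)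
      obtain ⟨z, hz1, hz2⟩ := exists_third ((0,0,0) : Bit3) ((1,0,0) : Bit3)
      have hz : z ∈ ({((0,0,0) : Bit3), (1,0,0)}ᶜ : Set Bit3) := by
        rintro (rfl | rfl)
        · exact hz1 rfl
        · exact hz2 rfl
      rw [← this] at hz
      exact hz
    · obtain ⟨w, hw⟩ := (Set.ne_univ_iff_exists_notMem _).1 hne
      obtain ⟨a, b, ha, hb, hab⟩ := ground_mixed hu hw
      have hsub : groundSet u ⊆ ({a, b}ᶜ : Set Bit3) := by
        intro z hz
        rintro (rfl | rfl)
        · exact ha hz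
        · exact hb hz
      have heq := hmax _ (pair_mem_PU hab) pair_ne_univ hsub
      exact ⟨a, b, by rw [heq, compl_compl], hab⟩
  · rintro ⟨x, y, hp, hxy⟩
    have hp' : p = ({x, y}ᶜ : Set Bit3) := by rw [← hp, compl_compl]
    subst hp'
    refine ⟨pair_mem_PU hxy, pair_ne_univ, ?_⟩
    intro q hq hqu hsub
    rcases hq with rfl | ⟨u, hu, rfl⟩
    · obtain ⟨z, hz1, hz2⟩ := exists_third x y
      have hz : z ∈ ({x, y}ᶜ : Set Bit3) := by
        rintro (rfl | rfl)
        · exact hz1 rfl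
        · exact hz2 rfl
      exact absurd (hsub hz) (Set.notMem_empty z)
    · obtain ⟨w, hw⟩ := (Set.ne_univ_iff_exists_notMem _).1 hqu
      obtain ⟨a, b, ha, hb, hab⟩ := ground_mixed hu hw
      have hane : a ≠ b := fun e => hab (by rw [e])
      -- a, b ∈ (groundSet u)ᶜ ⊆ {x, y}
      have hmemab : ∀ c : Bit3, c ∉ groundSet u → c = x ∨ c = y := by
        intro c hc
        have : c ∈ ({x, y} : Set Bit3) := by
          by_contra hcc
          exact hc (hsub (fun h => hcc h))
        exact this
      have hxa : ({x, y} : Set Bit3) = {a, b} := by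
        rcases hmemab a ha with rfl | rfl <;> rcases hmemab b hb with rfl | rfl
        · exact absurd rfl hane
        · rfl
        · exact Set.pair_comm _ _
        · exact absurd rfl hane
      apply Set.Subset.antisymm hsub
      intro z hz
      have : z ≠ a ∧ z ≠ b := by
        constructor <;> rintro rfl
        · exact ha hz
        · exact hb hz
      rw [hxa]
      rintro (rfl | rfl)
      · exact this.1 rfl
      · exact this.2 rfl

def ebit (x : Bit3) : ℕ := ((x.1 : ℕ) + (x.2.1 : ℕ) + (x.2.2 : ℕ)) % 2

lemma parity_eq_pow (x : Bit3) : parity x = (-1 : ℝ) ^ (ebit x) :=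
  neg_one_pow_eq_pow_mod_two _

lemma parity_eq_iff (x y : Bit3) : parity x = parity y ↔ ebit x = ebit y := by
  rw [parity_eq_pow, parity_eq_pow]
  constructor
  · intro h
    rcases Nat.mod_two_eq_zero_or_one ((x.1 : ℕ) + (x.2.1 : ℕ) + (x.2.2 : ℕ)) with h1 | h1 <;>
      rcases Nat.mod_two_eq_zero_or_one ((y.1 : ℕ) + (y.2.1 : ℕ) + (y.2.2 : ℕ)) with h2 | h2 <;>
      rw [show ebit x = _ from h1, show ebit y = _ from h2] at h ⊢ <;>
      norm_num at *
  · intro h; rw [h]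

lemma ebit_lt (x : Bit3) : ebit x = 0 ∨ ebit x = 1 := Nat.mod_two_eq_zero_or_one _

lemma count_coat : {p : Set Bit3 | IsCoat p}.ncard = 16 := by
  classical
  have hset : {p : Set Bit3 | IsCoat p} =
      ↑((Finset.univ.filter (fun xy : Bit3 × Bit3 => ebit xy.1 = 0 ∧ ebit xy.2 = 1)).image
        (fun xy => ({xy.1, xy.2} : Set Bit3)ᶜ)) := by
    ext p
    simp only [Set.mem_setOf_eq, coat_iff, Finset.coe_image, Set.mem_image, Finset.mem_coe,
      Finset.mem_filter, Finset.mem_univ, true_and]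
    constructor
    · rintro ⟨x, y, hp, hxy⟩
      have hb : ebit x ≠ ebit y := fun e => hxy ((parity_eq_iff x y).2 e)
      have hpc : p = ({x, y}ᶜ : Set Bit3) := by rw [← hp, compl_compl]
      rcases ebit_lt x with h1 | h1 <;> rcases ebit_lt y with h2 | h2
      · exact absurd (h1.trans h2.symm) hb
      · exact ⟨(x, y), ⟨h1, h2⟩, hpc.symm⟩
      · exact ⟨(y, x), ⟨h2, h1⟩, by rw [hpc, Set.pair_comm]⟩
      · exact absurd (h1.trans h2.symm) hb
    · rintro ⟨⟨x, y⟩, ⟨h0, h1⟩, rfl⟩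
      refine ⟨x, y, by rw [compl_compl], fun e => ?_⟩
      have h0' : ebit x = 0 := h0
      have h1' : ebit y = 1 := h1
      have := (parity_eq_iff x y).1 e
      omega
  rw [hset, Set.ncard_coe_finset, Finset.card_image_of_injOn, ]
  · decide
  · rintro ⟨x1, y1⟩ h1 ⟨x2, y2⟩ h2 he
    simp only [Finset.coe_filter, Finset.mem_univ, Set.mem_setOf_eq, true_and] at h1 h2
    have hs : ({x1, y1} : Set Bit3) = {x2, y2} := compl_injective he
    have hx : x1 = x2 := by
      have : x1 ∈ ({x2, y2} : Set Bit3) := hs ▸ Set.mem_insert x1 {y1}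
      rcases this with h | h
      · exact h
      · rw [Set.mem_singleton_iff] at h; subst h; omega
    have hy : y1 = y2 := by
      have : y1 ∈ ({x2, y2} : Set Bit3) := hs ▸ Set.mem_insert_of_mem x1 rfl
      rcases this with h | h
      · subst h; omega
      · exact h
    rw [hx, hy]

theorem stmt14 :
    (∀ p : Set Bit3, p.ncard = 6 →
      (IsCoat p ↔ ∃ x y : Bit3, pᶜ = {x, y} ∧ parity x ≠ parity y))
    ∧ {p : Set Bit3 | IsCoat p}.ncard = 16 := by
  exact ⟨fun p _ => coat_iff p, count_coat⟩
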